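/- Let (Γ₁,...,Γ_d) be a cycle-free d-partition of K_{2d} whose last component Γ_d equals the twin-star graph Ω_d^{(d)} (centered at vertices 2d−1 and 2d). Then for each 1 ≤ i ≤ d−1, the graph Γ_i has exactly one edge incident to vertex 2d−1 and exactly one edge incident to vertex 2d. -/

import Mathlib

open SimpleGraph
open Finset Walk

variable {V : Type*} [Fintype V] [DecidableEq V]

lemma myAcyclicCount (G : SimpleGraph V) [DecidableRel G.Adj] (hG : G.IsAcyclic) :
    G.edgeFinset.card + Fintype.card G.ConnectedComponent = Fintype.card V := by
  classical
  set root : V → V := fun v => (G.connectedComponentMk v).out with hrootdef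
  have hmk : ∀ v, G.connectedComponentMk (root v) = G.connectedComponentMk v := by
    intro v; exact (G.connectedComponentMk v).out_eq
  have hreach : ∀ v, G.Reachable v (root v) := fun v =>
    (ConnectedComponent.exact (hmk v)).symm
  have hEU : ∀ v, ∃! p : G.Walk v (root v), p.IsPath := by
    intro v
    obtain ⟨w⟩ := hreach v
    exact ⟨w.toPath, w.toPath.2, fun p hp => hG.path_unique ⟨p, hp⟩ w.toPath ▸ rfl⟩
  choose f hf hf' using hEU
  have hrooteq : ∀ {a b : V}, G.Reachable a b → root a = root b := by
    intro a b h
    simp only [hrootdef, ConnectedComponent.sound h]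
  set R : Finset V := univ.filter (fun v => root v = v) with hR
  -- card of R = number of components
  have hRcard : R.card = Fintype.card G.ConnectedComponent := by
    apply Finset.card_nbij (i := fun v => G.connectedComponentMk v)
    · intro a _; exact Finset.mem_univ _
    · intro a ha b hb hab
      simp only [hR, Finset.mem_coe, Finset.mem_filter] at ha hb
      rw [← ha.2, ← hb.2, hrootdef]
      simp [hab]
    · intro c _
      refine ⟨c.out, ?_, c.out_eq⟩
      simp only [hR, Finset.mem_coe, Finset.mem_filter]
      exact ⟨Finset.mem_univ _, congrArg Quot.out c.out_eq⟩
  -- nonnil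
  have hnil : ∀ v ∈ Rᶜ, ¬ (f v).Nil := by
    intro v hv
    apply not_nil_of_ne
    simp only [hR, Finset.mem_compl, Finset.mem_filter, Finset.mem_univ, true_and] at hv
    exact fun h => hv h.symm
  have hadj1 : ∀ v (hv : v ∈ Rᶜ), G.Adj v ((f v).getVert 1) := fun v hv =>
    Walk.adj_snd (hnil v hv)
  have key : Rᶜ.card = G.edgeFinset.card := by
    apply Finset.card_bij (i := fun v hv => s(v, (f v).getVert 1))
    · intro a ha
      rw [mem_edgeFinset, SimpleGraph.mem_edgeSet]
      exact hadj1 a ha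
    · intro a ha b hb h
      wlog h' : (f a).length ≤ (f b).length generalizing a b
      · exact Eq.symm (this _ hb _ ha (by rw [h]) (le_of_not_ge h'))
      rw [Sym2.eq_iff] at h
      obtain ⟨rfl, -⟩ | ⟨h1, h2⟩ := h
      · rfl
      -- a = getVert 1 of f b, b = getVert 1 of f a
      · exfalso
        have hab : G.Adj a b := h2 ▸ hadj1 a ha
        have hr : root a = root b := hrooteq hab.reachable
        have h3 := congrArg Walk.length (hf' b (((f a).tail).copy h2 hr) ?_)
        · rw [Walk.length_copy, ← add_left_inj 1, length_tail_add_one (hnil a ha)] at h3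
          omega
        · simp only [Walk.isPath_copy]
          exact (hf a).tail
    · -- surjective
      intro e he
      induction e with
      | _ x y =>
        rw [mem_edgeFinset, SimpleGraph.mem_edgeSet] at he
        wlog h' : (f x).length ≤ (f y).length generalizing x y
        · obtain ⟨a, ha, hae⟩ := this y x he.symm (le_of_not_ge h')
          exact ⟨a, ha, hae.trans (Sym2.eq_swap)⟩
        have hr : root x = root y := hrooteq he.reachable
        have hyR : y ∈ Rᶜ := by
          simp only [hR, Finset.mem_compl, Finset.mem_filter, Finset.mem_univ, true_and]
          intro hy
          have h0 : (f y).length = 0 := by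
            have := hf' y (Walk.nil.copy rfl hy.symm) (by simp only [Walk.isPath_copy]; exact IsPath.nil)
            rw [← this, Walk.length_copy, Walk.length_nil]
          have h1 : (f x).length = 1 := by
            have := hf' x ((Walk.cons he Walk.nil).copy rfl (by rw [hr, hy]))
              (by simp only [Walk.isPath_copy]; exact IsPath.nil.cons (by simpa using he.ne))
            rw [← this, Walk.length_copy, Walk.length_cons, Walk.length_nil]
          omega
        refine ⟨y, hyR, ?_⟩
        have hyx : y ∉ (f x).support := by
          intro hy
          have htu : (f x).takeUntil y hy = Walk.cons he Walk.nil := by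
            have := hG.path_unique ⟨_, (hf x).takeUntil hy⟩ ⟨Walk.cons he Walk.nil, IsPath.nil.cons (by simpa using he.ne)⟩
            exact Subtype.ext_iff.mp this
          have := Walk.take_spec (f x) hy
          rw [← this] at h'
          rw [Walk.length_append, htu] at h'
          have h4 := congrArg Walk.length (hf' y (((f x).dropUntil y hy).copy rfl hr)
            (by simp only [Walk.isPath_copy]; exact (hf x).dropUntil hy))
          rw [Walk.length_copy] at h4
          simp at h'
          omega
        have hw : f y = (Walk.cons he.symm (f x)).copy rfl hr := by
          refine (hf' y _ ?_).symm
          simp only [Walk.isPath_copy]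
          exact (cons_isPath_iff _ _).2 ⟨hf x, hyx⟩
        rw [hw]
        have : ((Walk.cons he.symm (f x)).copy rfl hr).getVert 1
            = (Walk.cons he.symm (f x)).getVert 1 := by
          rw [Walk.getVert_copy]
        rw [this]
        simp [Sym2.eq_swap]
  have hcompl : Rᶜ.card + R.card = Fintype.card V := by
    rw [Finset.card_compl]
    have := Finset.card_le_univ R
    omega
  omega


lemma myCardHalf (m t r : ℕ) (hr : r < 2) (h : 2*t ≤ m) :
    (Finset.univ.filter (fun v : Fin m => v.1 < 2*t ∧ v.1 % 2 = r)).card = t := by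
  have key : (Finset.univ.filter (fun v : Fin m => v.1 < 2*t ∧ v.1 % 2 = r)).card
      = (Finset.range t).card := by
    refine Finset.card_bij' (i := fun v _ => v.1 / 2)
      (j := fun k hk => (⟨2*k + r, by rw [Finset.mem_range] at hk; omega⟩ : Fin m))
      ?_ ?_ ?_ ?_
    · intro a ha
      simp only [Finset.mem_filter] at ha
      rw [Finset.mem_range]
      show a.1 / 2 < t
      omega
    · intro a ha
      rw [Finset.mem_range] at ha
      simp only [Finset.mem_filter, Finset.mem_univ, true_and]
      show 2*a + r < 2*t ∧ (2*a + r) % 2 = r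
      omega
    · intro a ha
      simp only [Finset.mem_filter] at ha
      show (⟨2*(a.1/2) + r, _⟩ : Fin m) = a
      ext
      show 2*(a.1/2) + r = a.1
      omega
    · intro a ha
      rw [Finset.mem_range] at ha
      show (2*a + r) / 2 = a
      omega
  rw [key, Finset.card_range]


/-- A cycle-free `d`-partition of the complete graph on `Fin n`: each unordered pair of
distinct vertices is an edge of exactly one component, and every component is acyclic. -/
def IsCFP {n d : ℕ} (Γ : Fin d → SimpleGraph (Fin n)) : Prop :=
  (∀ u v : Fin n, u ≠ v → ∃! i, (Γ i).Adj u v) ∧ ∀ i, (Γ i).IsAcyclic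

/-- `(u,v)` is the same unordered pair as `(a,b)`. -/
def SamePair {n : ℕ} (u v a b : Fin n) : Prop := (u = a ∧ v = b) ∨ (u = b ∧ v = a)

/-- The partitions `P` and `Q` differ on the edge `(u,v)`. -/
def Differs {n d : ℕ} (P Q : Fin d → SimpleGraph (Fin n)) (u v : Fin n) : Prop :=
  ∃ i, ¬ ((Q i).Adj u v ↔ (P i).Adj u v)

/-- `Q` agrees with `P` on every edge except the edges `(x,y)`, `(x,z)`, `(y,z)`,
and differs from `P` on at least two of those three edges. -/
def FlipCond {n d : ℕ} (x y z : Fin n) (P Q : Fin d → SimpleGraph (Fin n)) : Prop :=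
  (∀ u v : Fin n, ¬ SamePair u v x y → ¬ SamePair u v x z → ¬ SamePair u v y z →
      ∀ i, ((Q i).Adj u v ↔ (P i).Adj u v)) ∧
  ((Differs P Q x y ∧ Differs P Q x z) ∨ (Differs P Q x y ∧ Differs P Q y z) ∨
    (Differs P Q x z ∧ Differs P Q y z))

/-- One involution move between cycle-free partitions. -/
def Step {n d : ℕ} (P Q : Fin d → SimpleGraph (Fin n)) : Prop :=
  IsCFP P ∧ IsCFP Q ∧ ∃ x y z : Fin n, x ≠ y ∧ x ≠ z ∧ y ≠ z ∧ FlipCond x y z P Q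

/-- Involution equivalence: a finite sequence of involution moves. -/
def InvEquiv {n d : ℕ} : (Fin d → SimpleGraph (Fin n)) → (Fin d → SimpleGraph (Fin n)) → Prop :=
  Relation.ReflTransGen Step

/-- The graph `Ω_t^{(d)}` on vertices `{1,…,2d}` (vertex `v : Fin (2d)` has label `v+1`):
the edge `(i,j)`, `i<j`, belongs to `Ω_t` iff `i+j` is even and `i ∈ {2t-1,2t}`,
or `i+j` is odd and `j ∈ {2t-1,2t}`. -/
def Omega (d t : ℕ) : SimpleGraph (Fin (2*d)) :=
  SimpleGraph.fromRel (fun u v =>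
    u.1 < v.1 ∧
    (((u.1 + v.1) % 2 = 0 ∧ (u.1 + 1 = 2*t - 1 ∨ u.1 + 1 = 2*t)) ∨
     ((u.1 + v.1) % 2 = 1 ∧ (v.1 + 1 = 2*t - 1 ∨ v.1 + 1 = 2*t))))

/-- The standard twin-star cycle-free `d`-partition `E_d = (Ω₁,…,Ω_d)`. -/
def Ed (d : ℕ) : Fin d → SimpleGraph (Fin (2*d)) := fun t => Omega d (t.1 + 1)

/-- The twin-star graph `TS_d` with `2d` vertices: centers `0` and `1` are adjacent,
center `0` is adjacent to the `d-1` leaves `2,…,d`, and center `1` to the leaves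
`d+1,…,2d-1`. -/
def TwinStar (d : ℕ) : SimpleGraph (Fin (2*d)) :=
  SimpleGraph.fromRel (fun u v =>
    (u.1 = 0 ∧ 1 ≤ v.1 ∧ v.1 ≤ d) ∨ (u.1 = 1 ∧ d + 1 ≤ v.1))

/-- The action of `(σ, τ) ∈ S_{2d} × S_d` on a `d`-partition: `σ` relabels vertices and
`τ` permutes the order of the components. -/
def actP {n d : ℕ} (σ : Equiv.Perm (Fin n)) (τ : Equiv.Perm (Fin d))
    (P : Fin d → SimpleGraph (Fin n)) : Fin d → SimpleGraph (Fin n) :=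
  fun i => (P (τ⁻¹ i)).map σ.toEmbedding

/-- One step of weak equivalence: `P = (σ,τ) · (an involution move applied to Q)`. -/
def WStep {n d : ℕ} (P Q : Fin d → SimpleGraph (Fin n)) : Prop :=
  ∃ (σ : Equiv.Perm (Fin n)) (τ : Equiv.Perm (Fin d)) (R : Fin d → SimpleGraph (Fin n)),
    Step Q R ∧ P = actP σ τ R

/-- Weak equivalence of cycle-free `d`-partitions. -/
def WeakEquiv {n d : ℕ} : (Fin d → SimpleGraph (Fin n)) → (Fin d → SimpleGraph (Fin n)) → Prop :=
  Relation.ReflTransGen WStep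

/-- If the last component of a cycle-free `d`-partition of `K_{2d}` is the twin-star graph
`Ω_d^{(d)}` (centered at the vertices `2d-1` and `2d`), then every other component has
exactly one edge incident to the vertex `2d-1` and exactly one edge incident to `2d`. -/
theorem unique_edge_at_centers (d : ℕ) (hd : 0 < d)
    (Γ : Fin d → SimpleGraph (Fin (2*d))) (hΓ : IsCFP Γ)
    (hlast : Γ ⟨d-1, by omega⟩ = Omega d d) :
    ∀ i : Fin d, i.1 < d - 1 →
      (∃! u : Fin (2*d), (Γ i).Adj ⟨2*d-2, by omega⟩ u) ∧
      (∃! u : Fin (2*d), (Γ i).Adj ⟨2*d-1, by omega⟩ u) := by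
  classical
  intro i hi
  obtain ⟨huniq, hacyc⟩ := hΓ
  set last : Fin d := ⟨d-1, by omega⟩ with hlastdef
  have hlast' : Γ last = Omega d d := hlast
  -- Omega adjacency at the two centers
  have hO1 : ∀ v : Fin (2*d), (Omega d d).Adj ⟨2*d-2, by omega⟩ v ↔
      (v.1 = 2*d-1 ∨ (v.1 < 2*d-2 ∧ v.1 % 2 = 1)) := by
    intro v
    have hv := v.2
    simp only [Omega, fromRel_adj, ne_eq, Fin.ext_iff]
    omega
  have hO2 : ∀ v : Fin (2*d), (Omega d d).Adj ⟨2*d-1, by omega⟩ v ↔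
      (v.1 < 2*d-1 ∧ v.1 % 2 = 0) := by
    intro v
    have hv := v.2
    simp only [Omega, fromRel_adj, ne_eq, Fin.ext_iff]
    omega
  -- edge sets are pairwise disjoint
  have hdisjE : ∀ a ∈ (univ : Finset (Fin d)), ∀ b ∈ univ, a ≠ b →
      Disjoint (Γ a).edgeFinset (Γ b).edgeFinset := by
    intro a _ b _ hab
    rw [Finset.disjoint_left]
    intro e hea heb
    induction e with
    | _ u v =>
      rw [mem_edgeFinset, SimpleGraph.mem_edgeSet] at hea heb
      obtain ⟨k, hk, hk'⟩ := huniq u v hea.ne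
      exact hab ((hk' a hea).trans (hk' b heb).symm)
  have hcover : univ.biUnion (fun j => (Γ j).edgeFinset)
      = (⊤ : SimpleGraph (Fin (2*d))).edgeFinset := by
    ext e
    induction e with
    | _ u v =>
      simp only [Finset.mem_biUnion, mem_edgeFinset, SimpleGraph.mem_edgeSet, top_adj,
        Finset.mem_univ, true_and]
      constructor
      · rintro ⟨j, hj⟩
        exact hj.ne
      · intro h
        obtain ⟨k, hk, -⟩ := huniq u v h
        exact ⟨k, hk⟩
  have hsum : ∑ j, (Γ j).edgeFinset.card = d * (2*d - 1) := by
    rw [← Finset.card_biUnion hdisjE, hcover, card_edgeFinset_top_eq_card_choose_two,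
      Fintype.card_fin, Nat.choose_two_right,
      show 2*d*(2*d-1) = 2*(d*(2*d-1)) by ring, Nat.mul_div_cancel_left _ (by norm_num)]
  have hcnt : ∀ j, (Γ j).edgeFinset.card + Fintype.card (Γ j).ConnectedComponent = 2*d := by
    intro j
    have := myAcyclicCount (Γ j) (hacyc j)
    rwa [Fintype.card_fin] at this
  have hpos : ∀ j, 1 ≤ Fintype.card (Γ j).ConnectedComponent := by
    intro j
    exact Fintype.card_pos_iff.mpr ⟨(Γ j).connectedComponentMk ⟨0, by omega⟩⟩
  have hle : ∀ j, (Γ j).edgeFinset.card ≤ 2*d - 1 := by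
    intro j
    have h1 := hcnt j
    have h2 := hpos j
    omega
  have hEcard : ∀ j, (Γ j).edgeFinset.card = 2*d - 1 := by
    by_contra hcon
    push_neg at hcon
    obtain ⟨j, hj⟩ := hcon
    have hstrict := Finset.sum_lt_sum (f := fun j => (Γ j).edgeFinset.card)
      (g := fun _ => 2*d - 1) (fun k _ => hle k)
      ⟨j, Finset.mem_univ j, lt_of_le_of_ne (hle j) hj⟩
    rw [hsum, Finset.sum_const, Finset.card_univ, Fintype.card_fin, smul_eq_mul] at hstrict
    exact lt_irrefl _ hstrict
  have hconn : ∀ j, (Γ j).Connected := by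
    intro j
    have h1 : Fintype.card (Γ j).ConnectedComponent = 1 := by
      have h2 := hcnt j
      have h3 := hEcard j
      have h4 := hpos j
      omega
    rw [connected_iff]
    refine ⟨fun u v => ConnectedComponent.exact ?_, ⟨⟨0, by omega⟩⟩⟩
    exact Fintype.card_le_one_iff.mp h1.le _ _
  have hnbr : ∀ (j : Fin d) (c : Fin (2*d)), ∃ w, (Γ j).Adj c w := by
    intro j c
    have h2 : 1 < Fintype.card (Fin (2*d)) := by
      rw [Fintype.card_fin]; omega
    obtain ⟨w, hw⟩ := Fintype.exists_ne_of_one_lt_card h2 c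
    obtain ⟨p⟩ := (hconn j).preconnected c w
    exact ⟨p.getVert 1, Walk.adj_snd (not_nil_of_ne (Ne.symm hw))⟩
  -- the main counting argument at a center vertex
  have main : ∀ c : Fin (2*d),
      (univ.filter (fun v : Fin (2*d) => ¬ (Omega d d).Adj c v ∧ v ≠ c)).card = d - 1 →
      ∃! u, (Γ i).Adj c u := by
    intro c hcard
    set T : Finset (Fin d) := univ.erase last with hT
    have hTcard : T.card = d - 1 := by
      rw [hT, Finset.card_erase_of_mem (Finset.mem_univ _), Finset.card_univ, Fintype.card_fin]
    have hST : univ.filter (fun v : Fin (2*d) => ¬ (Omega d d).Adj c v ∧ v ≠ c)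
        = T.biUnion (fun j => (Γ j).neighborFinset c) := by
      ext v
      simp only [Finset.mem_filter, Finset.mem_univ, true_and, Finset.mem_biUnion,
        mem_neighborFinset, hT, Finset.mem_erase]
      constructor
      · rintro ⟨hno, hne⟩
        obtain ⟨k, hk, hk'⟩ := huniq c v (Ne.symm hne)
        refine ⟨k, ⟨?_, trivial⟩, hk⟩
        rintro rfl
        rw [hlast'] at hk
        exact hno hk
      · rintro ⟨k, ⟨hkne, -⟩, hkadj⟩
        refine ⟨fun hOadj => ?_, hkadj.ne'⟩
        obtain ⟨k', -, hk2⟩ := huniq c v hkadj.ne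
        exact hkne ((hk2 k hkadj).trans (hk2 last (by show (Γ last).Adj c v; rw [hlast']; exact hOadj)).symm)
    have hdisjN : ∀ a ∈ T, ∀ b ∈ T, a ≠ b →
        Disjoint ((Γ a).neighborFinset c) ((Γ b).neighborFinset c) := by
      intro a _ b _ hab
      rw [Finset.disjoint_left]
      intro v hva hvb
      rw [mem_neighborFinset] at hva hvb
      obtain ⟨k, -, hk'⟩ := huniq c v hva.ne
      exact hab ((hk' a hva).trans (hk' b hvb).symm)
    have hsumN : ∑ j ∈ T, ((Γ j).neighborFinset c).card = d - 1 := by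
      rw [← Finset.card_biUnion hdisjN, ← hST, hcard]
    have hgeN : ∀ j ∈ T, 1 ≤ ((Γ j).neighborFinset c).card := by
      intro j _
      obtain ⟨w, hw⟩ := hnbr j c
      exact Finset.card_pos.mpr ⟨w, (mem_neighborFinset _ _ _).mpr hw⟩
    have hiT : i ∈ T := by
      rw [hT, Finset.mem_erase]
      refine ⟨?_, Finset.mem_univ _⟩
      intro h
      have h2 : i.1 = d - 1 := congrArg Fin.val h
      omega
    have hone : ((Γ i).neighborFinset c).card = 1 := by
      by_contra hne1
      have hstrict := Finset.sum_lt_sum (f := fun _ => 1)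
        (g := fun j => ((Γ j).neighborFinset c).card) hgeN
        ⟨i, hiT, lt_of_le_of_ne (hgeN i hiT) (Ne.symm hne1)⟩
      rw [hsumN, Finset.sum_const, hTcard, smul_eq_mul, mul_one] at hstrict
      exact lt_irrefl _ hstrict
    obtain ⟨a, ha⟩ := Finset.card_eq_one.mp hone
    refine ⟨a, (mem_neighborFinset _ _ _).mp (ha ▸ Finset.mem_singleton_self a), ?_⟩
    intro u hu
    have : u ∈ (Γ i).neighborFinset c := (mem_neighborFinset _ _ _).mpr hu
    rw [ha, Finset.mem_singleton] at this
    exact this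
  constructor
  · apply main
    have heq : (univ.filter (fun v : Fin (2*d) =>
        ¬ (Omega d d).Adj ⟨2*d-2, by omega⟩ v ∧ v ≠ ⟨2*d-2, by omega⟩))
        = univ.filter (fun v : Fin (2*d) => v.1 < 2*(d-1) ∧ v.1 % 2 = 0) := by
      apply Finset.filter_congr
      intro v _
      have hv := v.2
      rw [hO1 v]
      simp only [ne_eq, Fin.ext_iff]
      omega
    rw [heq, myCardHalf _ _ _ (by omega) (by omega)]
  · apply main
    have heq : (univ.filter (fun v : Fin (2*d) =>
        ¬ (Omega d d).Adj ⟨2*d-1, by omega⟩ v ∧ v ≠ ⟨2*d-1, by omega⟩))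
        = univ.filter (fun v : Fin (2*d) => v.1 < 2*(d-1) ∧ v.1 % 2 = 1) := by
      apply Finset.filter_congr
      intro v _
      have hv := v.2
      rw [hO2 v]
      simp only [ne_eq, Fin.ext_iff]
      omega
    rw [heq, myCardHalf _ _ _ (by omega) (by omega)]
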